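/- Let T be a set and 𝒜 a collection of subsets of T containing ∅ and closed under binary intersections, and suppose there is a sequence (T_k)_{k∈ℕ} of elements of 𝒜 with T = ⋃_k T_k. Let μ be a measure on the σ-algebra generated by 𝒜 such that μ(A) < ∞ for every A ∈ 𝒜, and let p ∈ [1, ∞) be a real number. Then for every measurable function f : T → ℝ with ∫ |f|^p dμ < ∞ and every ε > 0, there exists a function g in the ℝ-linear span of {1_A : A ∈ 𝒜} such that (∫ |f − g|^p dμ)^{1/p} < ε; i.e. the space of simple functions is dense in L^p(μ). -/

import Mathlib

open MeasureTheory
open scoped ENNReal symmDiff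

section Aux

open Set

variable {T : Type*}

private lemma aux_ind_inter (A B : Set T) :
    (A ∩ B).indicator (fun _ => (1 : ℝ)) =
      A.indicator (fun _ => (1 : ℝ)) * B.indicator (fun _ => (1 : ℝ)) := by
  ext x
  by_cases hA : x ∈ A <;> by_cases hB : x ∈ B <;>
    simp [Set.indicator, hA, hB]

private lemma aux_ind_union (A B : Set T) :
    (A ∪ B).indicator (fun _ => (1 : ℝ)) =
      A.indicator (fun _ => (1 : ℝ)) + B.indicator (fun _ => (1 : ℝ))
        - (A ∩ B).indicator (fun _ => (1 : ℝ)) := by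
  ext x
  by_cases hA : x ∈ A <;> by_cases hB : x ∈ B <;>
    simp [Set.indicator, hA, hB]

private lemma aux_ind_diff (A B : Set T) :
    (A \ B).indicator (fun _ => (1 : ℝ)) =
      A.indicator (fun _ => (1 : ℝ)) - (A ∩ B).indicator (fun _ => (1 : ℝ)) := by
  ext x
  by_cases hA : x ∈ A <;> by_cases hB : x ∈ B <;>
    simp [Set.indicator, hA, hB]

private lemma aux_mul_mem {𝒜 : Set (Set T)}
    (hinter : ∀ A ∈ 𝒜, ∀ B ∈ 𝒜, A ∩ B ∈ 𝒜) {g h : T → ℝ}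
    (hg : g ∈ Submodule.span ℝ ((fun A : Set T => Set.indicator A (fun _ => (1 : ℝ))) '' 𝒜))
    (hh : h ∈ Submodule.span ℝ ((fun A : Set T => Set.indicator A (fun _ => (1 : ℝ))) '' 𝒜)) :
    g * h ∈ Submodule.span ℝ ((fun A : Set T => Set.indicator A (fun _ => (1 : ℝ))) '' 𝒜) := by
  induction hg using Submodule.span_induction with
  | mem x hx =>
    induction hh using Submodule.span_induction with
    | mem y hy =>
      obtain ⟨A, hA, rfl⟩ := hx
      obtain ⟨B, hB, rfl⟩ := hy
      exact Submodule.subset_span ⟨A ∩ B, hinter A hA B hB, aux_ind_inter A B⟩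
    | zero => simpa using Submodule.zero_mem _
    | add y z hy hz hy' hz' => simpa [mul_add] using Submodule.add_mem _ hy' hz'
    | smul a y hy hy' => simpa [mul_smul_comm] using Submodule.smul_mem _ a hy'
  | zero => simpa using Submodule.zero_mem _
  | add y z hy hz hy' hz' => simpa [add_mul] using Submodule.add_mem _ hy' hz'
  | smul a y hy hy' => simpa [smul_mul_assoc] using Submodule.smul_mem _ a hy'

private lemma aux_acc_zero {β : Type*} (s : ℕ → Set β) :
    Set.accumulate s 0 = s 0 := by
  ext x; simp [Set.mem_accumulate, Nat.le_zero]

private lemma aux_acc_succ {β : Type*} (s : ℕ → Set β) (n : ℕ) :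
    Set.accumulate s (n + 1) = Set.accumulate s n ∪ s (n + 1) := by
  ext x
  simp only [Set.mem_accumulate, Set.mem_union]
  constructor
  · rintro ⟨y, hy, hx⟩
    rcases Nat.le_add_one_iff.1 hy with h | rfl
    · exact Or.inl ⟨y, h, hx⟩
    · exact Or.inr hx
  · rintro (⟨y, hy, hx⟩ | hx)
    · exact ⟨y, le_trans hy (Nat.le_succ n), hx⟩
    · exact ⟨n + 1, le_rfl, hx⟩

end Aux

/-- **Density of simple functions in `Lᵖ(μ)`.**
If `∅ ∈ 𝒜`, `𝒜` is closed under binary intersections, `T` is a countable union of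
elements of `𝒜`, `μ` is a measure on `σ(𝒜)` finite on `𝒜` and `p ∈ [1, ∞)`, then every
measurable `f : T → ℝ` with `∫ |f|^p dμ < ∞` is approximated in `Lᵖ`-norm by elements of
the `ℝ`-linear span of `{1_A : A ∈ 𝒜}`. -/
theorem stmt_13 {T : Type*} (𝒜 : Set (Set T))
    (hempty : (∅ : Set T) ∈ 𝒜)
    (hinter : ∀ A ∈ 𝒜, ∀ B ∈ 𝒜, A ∩ B ∈ 𝒜)
    (Tk : ℕ → Set T) (hTk : ∀ k, Tk k ∈ 𝒜) (hTkU : (⋃ k, Tk k) = Set.univ)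
    (μ : @Measure T (MeasurableSpace.generateFrom 𝒜))
    (hμ : ∀ A ∈ 𝒜, μ A < ⊤)
    (p : ℝ) (hp : 1 ≤ p)
    (f : T → ℝ) (hf : @Measurable T ℝ (MeasurableSpace.generateFrom 𝒜) _ f)
    (hfp : ∫⁻ x, ENNReal.ofReal (|f x| ^ p) ∂μ < ⊤)
    (ε : ℝ) (hε : 0 < ε) :
    ∃ g ∈ Submodule.span ℝ
        ((fun A : Set T => Set.indicator A (fun _ => (1 : ℝ))) '' 𝒜),
      (∫⁻ x, ENNReal.ofReal (|f x - g x| ^ p) ∂μ) ^ (1 / p) < ENNReal.ofReal ε := by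
  classical
  letI m : MeasurableSpace T := MeasurableSpace.generateFrom 𝒜
  set S : Submodule ℝ (T → ℝ) :=
    Submodule.span ℝ ((fun A : Set T => Set.indicator A (fun _ => (1 : ℝ))) '' 𝒜) with hSdef
  have p0 : 0 < p := lt_of_lt_of_le one_pos hp
  -- the family of sets whose indicator lies in the span
  set C : Set (Set T) := {t : Set T | Set.indicator t (fun _ => (1 : ℝ)) ∈ S} with hCdef
  have hCA : ∀ A ∈ 𝒜, A ∈ C := fun A hA => Submodule.subset_span ⟨A, hA, rfl⟩
  have hCinter : ∀ s ∈ C, ∀ t ∈ C, s ∩ t ∈ C := by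
    intro s hs t ht
    show Set.indicator (s ∩ t) _ ∈ S
    rw [aux_ind_inter]
    exact aux_mul_mem hinter hs ht
  have hCunion : ∀ s ∈ C, ∀ t ∈ C, s ∪ t ∈ C := by
    intro s hs t ht
    show Set.indicator (s ∪ t) _ ∈ S
    rw [aux_ind_union]
    exact Submodule.sub_mem _ (Submodule.add_mem _ hs ht) (hCinter s hs t ht)
  have hCdiff : ∀ s ∈ C, ∀ t ∈ C, s \ t ∈ C := by
    intro s hs t ht
    show Set.indicator (s \ t) _ ∈ S
    rw [aux_ind_diff]
    exact Submodule.sub_mem _ hs (hCinter s hs t ht)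
  -- the sets all whose traces on `C` lie in `C` form an algebra containing `𝒜`
  have hR : IsSetAlgebra {t : Set T | ∀ u ∈ C, t ∩ u ∈ C} := by
    constructor
    · intro u hu
      have : (∅ : Set T) ∈ C := hCA ∅ hempty
      simpa using this
    · intro t ht u hu
      have : tᶜ ∩ u = u \ (t ∩ u) := by ext x; by_cases hx : x ∈ t <;> simp [hx]
      rw [this]
      exact hCdiff u hu _ (ht u hu)
    · intro t t' ht ht' u hu
      have : (t ∪ t') ∩ u = (t ∩ u) ∪ (t' ∩ u) := Set.union_inter_distrib_right t t' u
      rw [this]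
      exact hCunion _ (ht u hu) _ (ht' u hu)
  have halgR : MeasureTheory.generateSetAlgebra 𝒜 ⊆ {t : Set T | ∀ u ∈ C, t ∩ u ∈ C} :=
    hR.generateSetAlgebra_subset (fun A hA u hu => hCinter A (hCA A hA) u hu)
  -- the accumulated spanning sets
  set U : ℕ → Set T := Set.accumulate Tk with hUdef
  have hUC : ∀ n, U n ∈ C := by
    intro n
    induction n with
    | zero => simpa [hUdef, aux_acc_zero] using hCA _ (hTk 0)
    | succ n ih =>
        rw [hUdef, aux_acc_succ]
        exact hCunion _ ih _ (hCA _ (hTk (n + 1)))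
  have hUmeas : ∀ n, MeasurableSet (U n) := by
    intro n
    induction n with
    | zero =>
        simpa [hUdef, aux_acc_zero] using
          MeasurableSpace.measurableSet_generateFrom (hTk 0)
    | succ n ih =>
        rw [hUdef, aux_acc_succ]
        exact ih.union (MeasurableSpace.measurableSet_generateFrom (hTk (n + 1)))
  have hUfin : ∀ n, μ (U n) < ⊤ := by
    intro n
    induction n with
    | zero => simpa [hUdef, aux_acc_zero] using hμ _ (hTk 0)
    | succ n ih =>
        rw [hUdef, aux_acc_succ]
        exact lt_of_le_of_lt (measure_union_le _ _) (ENNReal.add_lt_top.2 ⟨ih, hμ _ (hTk (n + 1))⟩)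
  have hUuniv : ⋃ n, U n = Set.univ := by rw [hUdef, Set.iUnion_accumulate]; exact hTkU
  have hUmono : Monotone U := Set.monotone_accumulate
  -- measure density of the generated algebra
  have hgen : m = MeasurableSpace.generateFrom (MeasureTheory.generateSetAlgebra 𝒜) :=
    (MeasureTheory.generateFrom_generateSetAlgebra_eq).symm
  let Sp : μ.FiniteSpanningSetsIn (MeasureTheory.generateSetAlgebra 𝒜) :=
    ⟨Tk, fun k => MeasureTheory.self_subset_generateSetAlgebra (hTk k),
      fun k => hμ _ (hTk k), hTkU⟩
  have hdense0 := Measure.MeasureDense.of_generateFrom_isSetAlgebra_sigmaFinite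
    MeasureTheory.isSetAlgebra_generateSetAlgebra Sp hgen
  -- measure density of the sets in `C`
  have hdense : μ.MeasureDense {t : Set T | MeasurableSet t ∧ t ∈ C} := by
    constructor
    · exact fun s hs => hs.1
    · intro s ms hμs δ δpos
      obtain ⟨t, ht𝒜, hμt, hst⟩ := hdense0.fin_meas_approx ms hμs (δ / 2) (by linarith)
      have hmt : MeasurableSet t := hgen ▸ MeasurableSpace.measurableSet_generateFrom ht𝒜
      have hanti : Antitone fun n => t \ U n :=
        fun a b hab => Set.diff_subset_diff_right (hUmono hab)
      have hiInter : ⋂ n, (t \ U n) = ∅ := by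
        rw [← Set.diff_iUnion, hUuniv, Set.diff_univ]
      have htend : Filter.Tendsto (fun n => μ (t \ U n)) Filter.atTop (nhds 0) := by
        have h2 := tendsto_measure_iInter_atTop (μ := μ) (s := fun n => t \ U n)
          (fun n => (hmt.diff (hUmeas n)).nullMeasurableSet) hanti
          ⟨0, ne_top_of_le_ne_top hμt (measure_mono Set.diff_subset)⟩
        rw [hiInter] at h2
        simpa [Function.comp_def] using h2
      have hpos : (0 : ℝ≥0∞) < ENNReal.ofReal (δ / 2) := ENNReal.ofReal_pos.2 (by linarith)
      obtain ⟨N, hN⟩ := (htend.eventually (gt_mem_nhds hpos)).exists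
      refine ⟨t ∩ U N, ⟨hmt.inter (hUmeas N), halgR ht𝒜 _ (hUC N)⟩, ?_⟩
      have hsub : s ∆ (t ∩ U N) ⊆ (s ∆ t) ∪ (t \ U N) := by
        have h1 : t ∆ (t ∩ U N) = t \ U N := by
          rw [symmDiff_of_ge Set.inter_subset_left, Set.diff_self_inter]
        calc s ∆ (t ∩ U N) ⊆ (s ∆ t) ∪ (t ∆ (t ∩ U N)) := symmDiff_triangle s t (t ∩ U N)
          _ = (s ∆ t) ∪ (t \ U N) := by rw [h1]
      calc μ (s ∆ (t ∩ U N)) ≤ μ ((s ∆ t) ∪ (t \ U N)) := measure_mono hsub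
        _ ≤ μ (s ∆ t) + μ (t \ U N) := measure_union_le _ _
        _ < ENNReal.ofReal (δ / 2) + ENNReal.ofReal (δ / 2) := ENNReal.add_lt_add hst hN
        _ = ENNReal.ofReal δ := by
            rw [← ENNReal.ofReal_add (by linarith) (by linarith), add_halves]
  -- setup for Lᵖ
  set q : ℝ≥0∞ := ENNReal.ofReal p with hqdef
  have hq0 : q ≠ 0 := by simp [hqdef, ENNReal.ofReal_eq_zero, not_le, p0]
  have hqtop : q ≠ ∞ := ENNReal.ofReal_ne_top
  have hqto : q.toReal = p := ENNReal.toReal_ofReal p0.le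
  have key : ∀ (h : T → ℝ) (x : T),
      ENNReal.ofReal (|h x| ^ p) = (‖h x‖₊ : ℝ≥0∞) ^ p := by
    intro h x
    rw [← Real.norm_eq_abs, ← ENNReal.ofReal_rpow_of_nonneg (norm_nonneg _) p0.le,
      ofReal_norm, enorm_eq_nnnorm]
  have hLp : ∀ h : T → ℝ,
      (∫⁻ x, ENNReal.ofReal (|h x| ^ p) ∂μ) ^ (1 / p) = eLpNorm h q μ := by
    intro h
    rw [eLpNorm_eq_lintegral_rpow_enorm_toReal hq0 hqtop, hqto]
    congr 1
    exact lintegral_congr fun x => key h x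
  have hfmem : MemLp f q μ := by
    refine ⟨hf.aestronglyMeasurable, ?_⟩
    rw [← hLp f]
    exact ENNReal.rpow_lt_top_of_nonneg (by positivity) hfp.ne
  -- the approximation property for indicators
  have h0P : ∀ (c : ℝ) ⦃s : Set T⦄, MeasurableSet s → μ s < ∞ →
      ∀ {δ : ℝ≥0∞}, δ ≠ 0 →
        ∃ g : T → ℝ, eLpNorm (g - s.indicator fun _ => c) q μ ≤ δ ∧ g ∈ S := by
    intro c s ms hμs δ hδ
    by_cases hδtop : δ = ∞
    · exact ⟨0, hδtop ▸ le_top, Submodule.zero_mem _⟩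
    by_cases hc : c = 0
    · refine ⟨0, ?_, Submodule.zero_mem _⟩
      simp [hc]
    · have hcpos : (0 : ℝ) < ‖c‖ := norm_pos_iff.2 hc
      have hδt : (0 : ℝ) < δ.toReal := ENNReal.toReal_pos hδ hδtop
      set r : ℝ := δ.toReal / ‖c‖ with hrdef
      have hr : 0 < r := div_pos hδt hcpos
      obtain ⟨t, ⟨hmt, htC⟩, hst⟩ := hdense.approx s ms hμs.ne (r ^ p) (by positivity)
      refine ⟨Set.indicator t fun _ => c, ?_, ?_⟩
      · have hb : eLpNorm ((Set.indicator t fun _ => c) - s.indicator fun _ => c) q μ ≤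
            eLpNorm ((s ∆ t).indicator fun _ => c) q μ := by
          refine eLpNorm_mono fun x => ?_
          by_cases hxs : x ∈ s <;> by_cases hxt : x ∈ t <;>
            simp [Set.indicator, Set.mem_symmDiff, hxs, hxt]
        refine hb.trans ?_
        rw [eLpNorm_indicator_const (ms.symmDiff hmt) hq0 hqtop, hqto]
        have h1 : μ (s ∆ t) ^ (1 / p) ≤ (ENNReal.ofReal (r ^ p)) ^ (1 / p) :=
          ENNReal.rpow_le_rpow hst.le (by positivity)
        have h2 : (ENNReal.ofReal (r ^ p)) ^ (1 / p) = ENNReal.ofReal r := by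
          rw [← ENNReal.ofReal_rpow_of_nonneg hr.le p0.le, ← ENNReal.rpow_mul,
            mul_one_div_cancel p0.ne', ENNReal.rpow_one]
        calc (‖c‖₊ : ℝ≥0∞) * μ (s ∆ t) ^ (1 / p)
            ≤ (‖c‖₊ : ℝ≥0∞) * ENNReal.ofReal r := by
              rw [← h2]; exact mul_le_mul_right h1 _
          _ = ENNReal.ofReal (‖c‖ * r) := by
              rw [ENNReal.ofReal_mul (norm_nonneg c), ofReal_norm, enorm_eq_nnnorm]
          _ = δ := by
              rw [hrdef, mul_div_cancel₀ _ hcpos.ne', ENNReal.ofReal_toReal hδtop]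
      · have : (Set.indicator t fun _ => c) = c • Set.indicator t fun _ => (1 : ℝ) := by
          ext x; by_cases hx : x ∈ t <;> simp [hx]
        rw [this]
        exact Submodule.smul_mem _ c htC
  -- measurability of elements of the span
  have h2P : ∀ g : T → ℝ, g ∈ S → AEStronglyMeasurable g μ := by
    intro g hg
    refine Measurable.aestronglyMeasurable ?_
    induction hg using Submodule.span_induction with
    | mem x hx =>
      obtain ⟨A, hA, rfl⟩ := hx
      exact measurable_const.indicator (MeasurableSpace.measurableSet_generateFrom hA)
    | zero => exact measurable_const
    | add x y hx hy hx' hy' => exact hx'.add hy'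
    | smul a x hx hx' => exact hx'.const_smul a
  have hε2 : (ENNReal.ofReal ε) / 2 ≠ 0 := by
    simp [ENNReal.div_eq_zero_iff, ENNReal.ofReal_eq_zero, not_le, hε]
  obtain ⟨g, hg, hgS⟩ := hfmem.induction_dense hqtop (fun g => g ∈ S) h0P
    (fun _ _ h1 h2 => Submodule.add_mem _ h1 h2) h2P hε2
  refine ⟨g, hgS, ?_⟩
  have heq : (∫⁻ x, ENNReal.ofReal (|f x - g x| ^ p) ∂μ) ^ (1 / p) =
      eLpNorm (f - g) q μ := hLp (f - g)
  rw [heq]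
  exact lt_of_le_of_lt hg
    (ENNReal.half_lt_self (by simp [ENNReal.ofReal_eq_zero, not_le, hε]) ENNReal.ofReal_ne_top)
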